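/- Let f : ℝ → ℝ be concave on an interval [α, β] with 0 < α < β, and continuously differentiable there, with M = max over [α,β] of |f'|. Suppose n, ℓ, s, n₁, n₂, h₁, h₂, g are reals with n₁ + n₂ = n + ℓ, h₁ + h₂ = g - s + 1, 1 ≤ s ≤ ℓ, and all the ratios h₁/n₁, h₂/n₂, (g-s+1)/(n+ℓ), g/n lie in [α, β], with n, n₁, n₂ > 0 and ℓ ≤ n. Then n₁·f(h₁/n₁) + n₂·f(h₂/n₂) - n·f(g/n) ≤ (max_{[α,β]} f + 2M)·ℓ. -/

import Mathlib

/-- Quantitative form of Corollary 2.8: combining concavity with a derivative bound. -/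
theorem concave_ratio_bound {α β M Fmax : ℝ} (f : ℝ → ℝ)
    (hα : 0 < α) (hαβ : α < β) (hβ1 : β < 1)
    (hf : ConcaveOn ℝ (Set.Icc α β) f)
    (hf1 : ContDiffOn ℝ 1 f (Set.Icc α β))
    (hM : ∀ x ∈ Set.Icc α β, |deriv f x| ≤ M)
    (hFmax : ∀ x ∈ Set.Icc α β, f x ≤ Fmax)
    (n ℓ s n₁ n₂ h₁ h₂ g : ℝ)
    (hsum : n₁ + n₂ = n + ℓ) (hgen : h₁ + h₂ = g - s + 1)
    (hs1 : 1 ≤ s) (hsℓ : s ≤ ℓ) (hℓn : ℓ ≤ n)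
    (hn : 0 < n) (hn₁ : 0 < n₁) (hn₂ : 0 < n₂)
    (hr₁ : h₁ / n₁ ∈ Set.Icc α β) (hr₂ : h₂ / n₂ ∈ Set.Icc α β)
    (hr : (g - s + 1) / (n + ℓ) ∈ Set.Icc α β) (hrg : g / n ∈ Set.Icc α β) :
    n₁ * f (h₁ / n₁) + n₂ * f (h₂ / n₂) - n * f (g / n) ≤ (Fmax + 2 * M) * ℓ := by
  have hℓ1 : (1:ℝ) ≤ ℓ := hs1.trans hsℓ
  have hℓ0 : (0:ℝ) < ℓ := lt_of_lt_of_le one_pos hℓ1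
  have hnℓ : (0:ℝ) < n + ℓ := by linarith
  set S := Set.Icc α β with hS
  set v := (g - s + 1) / (n + ℓ) with hvdef
  set u := g / n with hudef
  have hM0 : 0 ≤ M := (abs_nonneg _).trans (hM α ⟨le_rfl, hαβ.le⟩)
  -- concavity step
  have hconc : n₁ * f (h₁ / n₁) + n₂ * f (h₂ / n₂) ≤ (n + ℓ) * f v := by
    have hab : n₁/(n+ℓ) + n₂/(n+ℓ) = 1 := by field_simp; linarith
    have hkey := hf.2 hr₁ hr₂ (le_of_lt (by positivity : (0:ℝ) < n₁/(n+ℓ)))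
      (le_of_lt (by positivity : (0:ℝ) < n₂/(n+ℓ))) hab
    have e1 : n₁/(n+ℓ) * (h₁/n₁) = h₁/(n+ℓ) := by field_simp
    have e2 : n₂/(n+ℓ) * (h₂/n₂) = h₂/(n+ℓ) := by field_simp
    have hv : n₁/(n+ℓ) * (h₁/n₁) + n₂/(n+ℓ) * (h₂/n₂) = v := by
      rw [e1, e2, ← add_div, hgen]
    have hkey' : n₁/(n+ℓ) * f (h₁/n₁) + n₂/(n+ℓ) * f (h₂/n₂) ≤ f v := by
      simpa [smul_eq_mul, hv] using hkey
    have heq : (n+ℓ) * (n₁/(n+ℓ) * f (h₁/n₁) + n₂/(n+ℓ) * f (h₂/n₂))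
        = n₁ * f (h₁/n₁) + n₂ * f (h₂/n₂) := by field_simp
    have := mul_le_mul_of_nonneg_left hkey' hnℓ.le
    linarith
  -- derivative bound step
  have hdiff : DifferentiableOn ℝ f S := hf1.differentiableOn one_ne_zero
  have hcont' : ContinuousOn (derivWithin f S) S :=
    hf1.continuousOn_derivWithin (uniqueDiffOn_Icc hαβ) le_rfl
  have hbound : ∀ x ∈ S, ‖derivWithin f S x‖ ≤ M := by
    intro x hx
    have hclos : x ∈ closure (Set.Ioo α β) := by
      rw [closure_Ioo hαβ.ne]; exact hx
    have hne : (nhdsWithin x (Set.Ioo α β)).NeBot :=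
      mem_closure_iff_nhdsWithin_neBot.mp hclos
    have htend : Filter.Tendsto (fun y => ‖derivWithin f S y‖)
        (nhdsWithin x (Set.Ioo α β)) (nhds ‖derivWithin f S x‖) :=
      ((hcont' x hx).mono_left (nhdsWithin_mono x Set.Ioo_subset_Icc_self)).norm
    refine le_of_tendsto htend ?_
    filter_upwards [self_mem_nhdsWithin] with y hy
    have hyd : derivWithin f S y = deriv f y :=
      derivWithin_of_mem_nhds (Icc_mem_nhds hy.1 hy.2)
    rw [hyd, Real.norm_eq_abs]
    exact hM y (Set.Ioo_subset_Icc_self hy)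
  have hlip : ‖f v - f u‖ ≤ M * ‖v - u‖ :=
    (convex_Icc α β).norm_image_sub_le_of_norm_hasDerivWithin_le
      (fun x hx => (hdiff x hx).hasDerivWithinAt) hbound hrg hr
  -- arithmetic
  have hg0 : 0 < g := by
    have h0 : 0 < g / n := lt_of_lt_of_le hα hrg.1
    have := (lt_div_iff₀ hn).mp h0
    linarith
  have hgn : g ≤ n := by
    have := (div_le_iff₀ hn).mp hrg.2
    nlinarith
  have hvu : v - u = ((g - s + 1) * n - g * (n + ℓ)) / ((n + ℓ) * n) := by
    rw [hvdef, hudef]; field_simp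
  have habs : n * |v - u| ≤ 2 * ℓ := by
    rw [hvu, abs_div, abs_of_pos (mul_pos hnℓ hn)]
    rw [mul_div_assoc', div_le_iff₀ (mul_pos hnℓ hn)]
    have hnum : |(g - s + 1) * n - g * (n + ℓ)| ≤ 2 * ℓ * (n + ℓ) := by
      rw [abs_le]; constructor <;> nlinarith
    nlinarith [abs_nonneg ((g - s + 1) * n - g * (n + ℓ))]
  have hlip' : f v - f u ≤ M * |v - u| := by
    rw [Real.norm_eq_abs, Real.norm_eq_abs] at hlip
    exact (le_abs_self _).trans hlip
  have hfv : f v ≤ Fmax := hFmax v hr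
  have key : n * f v - n * f u ≤ 2 * M * ℓ := by
    have h1 : n * (f v - f u) ≤ n * (M * |v - u|) :=
      mul_le_mul_of_nonneg_left hlip' hn.le
    have h2 : n * (M * |v - u|) = M * (n * |v - u|) := by ring
    have h3 : M * (n * |v - u|) ≤ M * (2 * ℓ) := mul_le_mul_of_nonneg_left habs hM0
    nlinarith
  have hsplit : (n + ℓ) * f v = n * f v + ℓ * f v := by ring
  have hℓfv : ℓ * f v ≤ ℓ * Fmax := mul_le_mul_of_nonneg_left hfv hℓ0.le
  have hgoal : (Fmax + 2 * M) * ℓ = ℓ * Fmax + 2 * M * ℓ := by ring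
  linarith
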